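/- Fix b > 0 and z ∈ ℍ, and let {μ_s} be a measurable family of probability measures on ℝ. The Picard iteration B₀(a) ≡ z, B_{n+1}(a) = z − ∫_a^b (∫_ℝ 1/(B_n(s)−x) dμ_s(x)) ds satisfies Im(B_n(a)) ≥ Im(z) for all n and a ∈ [0,b], and |B_{n+1}(a) − B_n(a)| ≤ (b−a)^{n+1} / (Im(z)^{2n+1} · (n+1)!) for all n ≥ 0. -/

import Mathlib

open MeasureTheory Complex Set

lemma pic_norm_inv_le {ε : ℝ} (hε : 0 < ε) {w : ℂ} (hw : ε ≤ w.im) (x : ℝ) :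
    ‖(w - (x : ℂ))⁻¹‖ ≤ ε⁻¹ := by
  have h1 : ε ≤ ‖w - (x : ℂ)‖ := by
    have : |(w - (x : ℂ)).im| ≤ ‖w - (x : ℂ)‖ := Complex.abs_im_le_norm _
    simp only [Complex.sub_im, Complex.ofReal_im, sub_zero] at this
    exact le_trans (le_trans hw (le_abs_self _)) this
  rw [norm_inv]
  exact inv_anti₀ hε h1

lemma pic_integrable (μ : Measure ℝ) [IsFiniteMeasure μ] {w : ℂ} (hw : 0 < w.im) :
    Integrable (fun x : ℝ => (w - (x : ℂ))⁻¹) μ := by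
  have hne : ∀ x : ℝ, w - (x : ℂ) ≠ 0 := by
    intro x h
    have := congrArg Complex.im h
    simp at this
    exact hw.ne' this
  have hcont : Continuous fun x : ℝ => (w - (x : ℂ))⁻¹ :=
    ((continuous_const.sub Complex.continuous_ofReal).inv₀ hne)
  refine Integrable.mono' (integrable_const (w.im)⁻¹) hcont.aestronglyMeasurable ?_
  exact ae_of_all _ fun x => pic_norm_inv_le hw le_rfl x

lemma pic_norm_integral_le (μ : Measure ℝ) [IsProbabilityMeasure μ] {ε : ℝ} (hε : 0 < ε)
    {w : ℂ} (hw : ε ≤ w.im) : ‖∫ x : ℝ, (w - (x : ℂ))⁻¹ ∂μ‖ ≤ ε⁻¹ := by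
  calc ‖∫ x : ℝ, (w - (x : ℂ))⁻¹ ∂μ‖ ≤ ∫ _ : ℝ, ε⁻¹ ∂μ :=
        norm_integral_le_of_norm_le (integrable_const _) (ae_of_all _ fun x => pic_norm_inv_le hε hw x)
    _ = ε⁻¹ := by simp

lemma pic_im_nonpos (μ : Measure ℝ) [IsProbabilityMeasure μ] {w : ℂ} (hw : 0 < w.im) :
    (∫ x : ℝ, (w - (x : ℂ))⁻¹ ∂μ).im ≤ 0 := by
  have h : (∫ x : ℝ, (w - (x : ℂ))⁻¹ ∂μ).im = ∫ x : ℝ, ((w - (x : ℂ))⁻¹).im ∂μ :=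
    (integral_im (pic_integrable μ hw)).symm
  rw [h]
  refine integral_nonpos fun x => ?_
  rw [Complex.inv_im]
  apply div_nonpos_of_nonpos_of_nonneg
  · simp [hw.le]
  · exact Complex.normSq_nonneg _

lemma pic_lipschitz (μ : Measure ℝ) [IsProbabilityMeasure μ] {ε : ℝ} (hε : 0 < ε)
    {w w' : ℂ} (hw : ε ≤ w.im) (hw' : ε ≤ w'.im) :
    ‖(∫ x : ℝ, (w - (x : ℂ))⁻¹ ∂μ) - ∫ x : ℝ, (w' - (x : ℂ))⁻¹ ∂μ‖
      ≤ ε⁻¹ * ε⁻¹ * ‖w - w'‖ := by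
  have hwp : 0 < w.im := lt_of_lt_of_le hε hw
  have hw'p : 0 < w'.im := lt_of_lt_of_le hε hw'
  rw [← integral_sub (pic_integrable μ hwp) (pic_integrable μ hw'p)]
  calc ‖∫ x : ℝ, ((w - (x : ℂ))⁻¹ - (w' - (x : ℂ))⁻¹) ∂μ‖
      ≤ ∫ _ : ℝ, ε⁻¹ * ε⁻¹ * ‖w - w'‖ ∂μ := by
        refine norm_integral_le_of_norm_le (integrable_const _) (ae_of_all _ fun x => ?_)
        have hne : w - (x : ℂ) ≠ 0 := by
          intro h; have := congrArg Complex.im h; simp at this; exact hwp.ne' this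
        have hne' : w' - (x : ℂ) ≠ 0 := by
          intro h; have := congrArg Complex.im h; simp at this; exact hw'p.ne' this
        have key : (w - (x : ℂ))⁻¹ - (w' - (x : ℂ))⁻¹
            = (w - (x : ℂ))⁻¹ * (w' - (x : ℂ))⁻¹ * (w' - w) := by
          field_simp
          ring
        rw [key]
        rw [norm_mul, norm_mul]
        have h1 := pic_norm_inv_le hε hw x
        have h2 := pic_norm_inv_le hε hw' x
        have h3 : ‖w' - w‖ = ‖w - w'‖ := norm_sub_rev _ _
        rw [h3]
        gcongr <;> positivity
    _ = ε⁻¹ * ε⁻¹ * ‖w - w'‖ := by simp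

lemma pic_meas (μ : ℝ → Measure ℝ) [∀ s, IsProbabilityMeasure (μ s)]
    (hmeas : ∀ w : ℂ, 0 < w.im → Measurable fun s : ℝ => ∫ x : ℝ, (w - (x : ℂ))⁻¹ ∂(μ s))
    {ε : ℝ} (hε : 0 < ε) {f : ℝ → ℂ} {ν : Measure ℝ} (hf : AEMeasurable f ν)
    (hfim : ∀ᵐ s ∂ν, ε ≤ (f s).im) :
    AEStronglyMeasurable (fun s => ∫ x : ℝ, (f s - (x : ℂ))⁻¹ ∂(μ s)) ν := by
  set r : ℂ → ℂ := fun w => (w.re : ℂ) + (max w.im ε : ℝ) * Complex.I with hr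
  have hrim : ∀ w, (r w).im = max w.im ε := by intro w; simp [hr]
  have hrre : ∀ w, (r w).re = w.re := by intro w; simp [hr]
  have hrpos : ∀ w, 0 < (r w).im := fun w => by rw [hrim]; exact lt_of_lt_of_le hε (le_max_right _ _)
  have hrge : ∀ w, ε ≤ (r w).im := fun w => by rw [hrim]; exact le_max_right _ _
  set u : ℂ → ℝ → ℂ := fun w s => ∫ x : ℝ, (r w - (x : ℂ))⁻¹ ∂(μ s) with hu
  have hrlip : ∀ w w' : ℂ, ‖r w - r w'‖ ≤ 2 * ‖w - w'‖ := by
    intro w w'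
    have h1 : ‖r w - r w'‖ ≤ |(r w - r w').re| + |(r w - r w').im| :=
      Complex.norm_le_abs_re_add_abs_im _
    refine h1.trans ?_
    have h2 : |(r w - r w').re| ≤ ‖w - w'‖ := by
      rw [Complex.sub_re, hrre, hrre]
      have := Complex.abs_re_le_norm (w - w')
      rw [Complex.sub_re] at this
      exact this
    have h3 : |(r w - r w').im| ≤ ‖w - w'‖ := by
      rw [Complex.sub_im, hrim, hrim]
      refine (abs_max_sub_max_le_abs _ _ _).trans ?_
      have := Complex.abs_im_le_norm (w - w')
      rw [Complex.sub_im] at this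
      exact this
    linarith
  have hcont : ∀ s, Continuous fun w => u w s := by
    intro s
    refine LipschitzWith.continuous (K := ⟨ε⁻¹ * ε⁻¹ * 2, by positivity⟩)
      (LipschitzWith.of_dist_le_mul fun w w' => ?_)
    rw [dist_eq_norm, dist_eq_norm]
    calc ‖u w s - u w' s‖ ≤ ε⁻¹ * ε⁻¹ * ‖r w - r w'‖ :=
          pic_lipschitz (μ s) hε (hrge w) (hrge w')
      _ ≤ ε⁻¹ * ε⁻¹ * (2 * ‖w - w'‖) := by
          gcongr
          exact hrlip w w'
      _ = ↑(⟨ε⁻¹ * ε⁻¹ * 2, by positivity⟩ : NNReal) * ‖w - w'‖ := by push_cast; ring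
  have hm : ∀ w, Measurable (u w) := fun w => hmeas (r w) (hrpos w)
  have huncurry : Measurable (Function.uncurry u) :=
    measurable_uncurry_of_continuous_of_measurable hcont hm
  have hcomp : AEMeasurable (fun s => u (f s) s) ν := by
    have : AEMeasurable (fun s => (f s, s)) ν := hf.prodMk aemeasurable_id
    exact huncurry.comp_aemeasurable this
  refine (hcomp.aestronglyMeasurable).congr ?_
  filter_upwards [hfim] with s hs
  have : r (f s) = f s := by
    apply Complex.ext
    · exact hrre _
    · rw [hrim]; exact max_eq_left hs
  simp only [hu, this]

/-- Picard iteration for the backward chordal Loewner equation: with `B₀(a) ≡ z` and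
`B_{n+1}(a) = z - ∫_a^b ∫ 1/(B_n(s)-x) dμ_s(x) ds`, one has `Im(B_n(a)) ≥ Im z`
and `|B_{n+1}(a) - B_n(a)| ≤ (b-a)^{n+1}/(Im(z)^{2n+1}·(n+1)!)` on `[0,b]`. -/
theorem loewner_picard_iteration (b : ℝ) (hb : 0 < b) (z : ℂ) (hz : 0 < z.im)
    (μ : ℝ → Measure ℝ) [∀ s, IsProbabilityMeasure (μ s)]
    (hmeas : ∀ w : ℂ, 0 < w.im → Measurable fun s : ℝ => ∫ x : ℝ, (w - (x : ℂ))⁻¹ ∂(μ s))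
    (B : ℕ → ℝ → ℂ)
    (hB0 : ∀ a : ℝ, B 0 a = z)
    (hBrec : ∀ n : ℕ, ∀ a ∈ Set.Icc (0 : ℝ) b,
      B (n + 1) a = z - ∫ s in Set.Ioc a b, (∫ x : ℝ, (B n s - (x : ℂ))⁻¹ ∂(μ s))) :
    (∀ n : ℕ, ∀ a ∈ Set.Icc (0 : ℝ) b, z.im ≤ (B n a).im) ∧
    (∀ n : ℕ, ∀ a ∈ Set.Icc (0 : ℝ) b,
      ‖B (n + 1) a - B n a‖ ≤
        (b - a) ^ (n + 1) / (z.im ^ (2 * n + 1) * ((n + 1).factorial : ℝ))) := by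
  -- the joint invariant: imaginary part bound and measurability of the integrand
  have main : ∀ n : ℕ, (∀ a ∈ Set.Icc (0 : ℝ) b, z.im ≤ (B n a).im) ∧
      AEStronglyMeasurable (fun s => ∫ x : ℝ, (B n s - (x : ℂ))⁻¹ ∂(μ s))
        (volume.restrict (Set.Ioc 0 b)) := by
    intro n
    induction n with
    | zero =>
      constructor
      · intro a _; rw [hB0 a]
      · have he : (fun s => ∫ x : ℝ, (B 0 s - (x : ℂ))⁻¹ ∂(μ s))
            = fun s => ∫ x : ℝ, (z - (x : ℂ))⁻¹ ∂(μ s) := by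
          funext s; rw [hB0 s]
        rw [he]
        exact (hmeas z hz).aestronglyMeasurable
    | succ n ih =>
      obtain ⟨him, hm⟩ := ih
      have hint : ∀ a ∈ Set.Icc (0 : ℝ) b,
          IntegrableOn (fun s => ∫ x : ℝ, (B n s - (x : ℂ))⁻¹ ∂(μ s)) (Set.Ioc a b) := by
        intro a ha
        have hsub : Set.Ioc a b ⊆ Set.Ioc 0 b := Set.Ioc_subset_Ioc ha.1 le_rfl
        refine Integrable.mono' (integrableOn_const (C := z.im⁻¹) measure_Ioc_lt_top.ne)
          (hm.mono_measure (Measure.restrict_mono hsub le_rfl)) ?_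
        filter_upwards [ae_restrict_mem measurableSet_Ioc] with s hs
        exact pic_norm_integral_le (μ s) hz (him s ⟨ha.1.trans hs.1.le, hs.2⟩)
      have hims : ∀ a ∈ Set.Icc (0 : ℝ) b, z.im ≤ (B (n + 1) a).im := by
        intro a ha
        rw [hBrec n a ha]
        have h1 : (∫ s in Set.Ioc a b, ∫ x : ℝ, (B n s - (x : ℂ))⁻¹ ∂(μ s)).im
            = ∫ s in Set.Ioc a b, (∫ x : ℝ, (B n s - (x : ℂ))⁻¹ ∂(μ s)).im :=
          (integral_im (hint a ha)).symm
        have hle : (∫ s in Set.Ioc a b, ∫ x : ℝ, (B n s - (x : ℂ))⁻¹ ∂(μ s)).im ≤ 0 := by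
          rw [h1]
          refine integral_nonpos_of_ae ?_
          filter_upwards [ae_restrict_mem measurableSet_Ioc] with s hs
          exact pic_im_nonpos (μ s) (lt_of_lt_of_le hz (him s ⟨ha.1.trans hs.1.le, hs.2⟩))
        rw [Complex.sub_im]; linarith
      refine ⟨hims, ?_⟩
      -- continuity of the next iterate on [0, b]
      have hIcc : IntegrableOn (fun s => ∫ x : ℝ, (B n s - (x : ℂ))⁻¹ ∂(μ s)) (Set.Icc 0 b) :=
        (integrableOn_Icc_iff_integrableOn_Ioc).2 (hint 0 ⟨le_rfl, hb.le⟩)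
      have hprim : ContinuousOn
          (fun a => ∫ t in Set.Ioc 0 a, ∫ x : ℝ, (B n t - (x : ℂ))⁻¹ ∂(μ t))
          (Set.Icc 0 b) := intervalIntegral.continuousOn_primitive hIcc
      set h : ℝ → ℂ := fun a => z -
        ((∫ t in Set.Ioc 0 b, ∫ x : ℝ, (B n t - (x : ℂ))⁻¹ ∂(μ t))
          - ∫ t in Set.Ioc 0 a, ∫ x : ℝ, (B n t - (x : ℂ))⁻¹ ∂(μ t)) with hhdef
      have hcontOn : ContinuousOn h (Set.Icc 0 b) :=
        continuousOn_const.sub (continuousOn_const.sub hprim)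
      have heq : ∀ a ∈ Set.Ioc (0 : ℝ) b, B (n + 1) a = h a := by
        intro a ha
        have ha' : a ∈ Set.Icc (0 : ℝ) b := Set.Ioc_subset_Icc_self ha
        rw [hBrec n a ha']
        have hsplit : (∫ t in Set.Ioc 0 b, ∫ x : ℝ, (B n t - (x : ℂ))⁻¹ ∂(μ t))
            = (∫ t in Set.Ioc 0 a, ∫ x : ℝ, (B n t - (x : ℂ))⁻¹ ∂(μ t))
              + ∫ t in Set.Ioc a b, ∫ x : ℝ, (B n t - (x : ℂ))⁻¹ ∂(μ t) := by
          rw [← setIntegral_union (Set.Ioc_disjoint_Ioc_of_le le_rfl) measurableSet_Ioc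
            ((hint 0 ⟨le_rfl, hb.le⟩).mono_set (Set.Ioc_subset_Ioc le_rfl ha'.2))
            (hint a ha'), Set.Ioc_union_Ioc_eq_Ioc ha.1.le ha.2]
        rw [hhdef]
        simp only []
        rw [hsplit]
        ring
      have hBmeas : AEMeasurable (B (n + 1)) (volume.restrict (Set.Ioc 0 b)) := by
        have h1 : AEStronglyMeasurable h (volume.restrict (Set.Ioc 0 b)) :=
          (hcontOn.aestronglyMeasurable measurableSet_Icc).mono_measure
            (Measure.restrict_mono Set.Ioc_subset_Icc_self le_rfl)
        refine h1.aemeasurable.congr ?_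
        filter_upwards [ae_restrict_mem measurableSet_Ioc] with s hs
        exact (heq s hs).symm
      exact pic_meas μ hmeas hz hBmeas
        (by filter_upwards [ae_restrict_mem measurableSet_Ioc] with s hs
            exact hims s (Set.Ioc_subset_Icc_self hs))
  -- integrability, available for all n now
  have hint : ∀ n : ℕ, ∀ a ∈ Set.Icc (0 : ℝ) b,
      IntegrableOn (fun s => ∫ x : ℝ, (B n s - (x : ℂ))⁻¹ ∂(μ s)) (Set.Ioc a b) := by
    intro n a ha
    have hsub : Set.Ioc a b ⊆ Set.Ioc 0 b := Set.Ioc_subset_Ioc ha.1 le_rfl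
    refine Integrable.mono' (integrableOn_const (C := z.im⁻¹) measure_Ioc_lt_top.ne)
      ((main n).2.mono_measure (Measure.restrict_mono hsub le_rfl)) ?_
    filter_upwards [ae_restrict_mem measurableSet_Ioc] with s hs
    exact pic_norm_integral_le (μ s) hz ((main n).1 s ⟨ha.1.trans hs.1.le, hs.2⟩)
  refine ⟨fun n => (main n).1, ?_⟩
  intro n
  induction n with
  | zero =>
    intro a ha
    rw [hBrec 0 a ha, hB0 a]
    have he : z - (∫ s in Set.Ioc a b, ∫ x : ℝ, (B 0 s - (x : ℂ))⁻¹ ∂(μ s)) - z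
        = -(∫ s in Set.Ioc a b, ∫ x : ℝ, (B 0 s - (x : ℂ))⁻¹ ∂(μ s)) := by ring
    rw [he, norm_neg]
    have hbound : ‖∫ s in Set.Ioc a b, ∫ x : ℝ, (B 0 s - (x : ℂ))⁻¹ ∂(μ s)‖
        ≤ ∫ _ in Set.Ioc a b, z.im⁻¹ := by
      refine norm_integral_le_of_norm_le (integrableOn_const measure_Ioc_lt_top.ne) ?_
      filter_upwards [ae_restrict_mem measurableSet_Ioc] with s hs
      exact pic_norm_integral_le (μ s) hz ((main 0).1 s ⟨ha.1.trans hs.1.le, hs.2⟩)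
    refine hbound.trans ?_
    rw [setIntegral_const, Real.volume_real_Ioc_of_le ha.2,
      smul_eq_mul]
    apply le_of_eq
    have hzi : z.im ≠ 0 := hz.ne'
    field_simp [Nat.factorial]
    simp; ring
  | succ n ih =>
    intro a ha
    have hd : B (n + 1 + 1) a - B (n + 1) a
        = ∫ s in Set.Ioc a b, ((∫ x : ℝ, (B n s - (x : ℂ))⁻¹ ∂(μ s))
            - ∫ x : ℝ, (B (n + 1) s - (x : ℂ))⁻¹ ∂(μ s)) := by
      rw [hBrec (n + 1) a ha, hBrec n a ha, integral_sub (hint n a ha) (hint (n + 1) a ha)]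
      ring
    rw [hd]
    have hbound : ‖∫ s in Set.Ioc a b, ((∫ x : ℝ, (B n s - (x : ℂ))⁻¹ ∂(μ s))
            - ∫ x : ℝ, (B (n + 1) s - (x : ℂ))⁻¹ ∂(μ s))‖
        ≤ ∫ s in Set.Ioc a b, ((b - s) ^ (n + 1)
            * (z.im⁻¹ * z.im⁻¹ / (z.im ^ (2 * n + 1) * ((n + 1).factorial : ℝ)))) := by
      refine norm_integral_le_of_norm_le ?_ ?_
      · apply Continuous.integrableOn_Ioc
        exact (((continuous_const.sub continuous_id).pow _).mul continuous_const)
      · filter_upwards [ae_restrict_mem measurableSet_Ioc] with s hs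
        have hs' : s ∈ Set.Icc (0 : ℝ) b := ⟨ha.1.trans hs.1.le, hs.2⟩
        have hl := pic_lipschitz (μ s) hz ((main n).1 s hs') ((main (n + 1)).1 s hs')
        refine hl.trans ?_
        rw [norm_sub_rev]
        have := ih s hs'
        calc z.im⁻¹ * z.im⁻¹ * ‖B (n + 1) s - B n s‖
            ≤ z.im⁻¹ * z.im⁻¹ * ((b - s) ^ (n + 1) / (z.im ^ (2 * n + 1) * ((n + 1).factorial : ℝ))) := by
              gcongr
          _ = (b - s) ^ (n + 1) * (z.im⁻¹ * z.im⁻¹ / (z.im ^ (2 * n + 1) * ((n + 1).factorial : ℝ))) := by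
              ring
    refine hbound.trans ?_
    rw [integral_mul_const]
    have hI : (∫ s in Set.Ioc a b, (b - s) ^ (n + 1)) = (b - a) ^ (n + 2) / (n + 2) := by
      rw [← intervalIntegral.integral_of_le ha.2]
      have h2 := intervalIntegral.integral_comp_sub_left (a := a) (b := b)
        (fun x : ℝ => x ^ (n + 1)) b
      simp only [sub_self] at h2
      rw [h2, integral_pow]
      push_cast
      ring
    rw [hI]
    apply le_of_eq
    have hfz : ((n + 1).factorial : ℝ) > 0 := by positivity
    have hf2 : ((n + 1 + 1).factorial : ℝ) = (n + 2) * ((n + 1).factorial : ℝ) := by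
      rw [Nat.factorial_succ]; push_cast; ring
    rw [hf2]
    have hzi : z.im ≠ 0 := hz.ne'
    field_simp
    ring
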